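/- For a triangular system of coupled cut Laguerre recursions (each i-th recursion containing mixing terms only involving variables of recursions with index j > i, with j-independent mixing coefficients), the set of values x admitting a nontrivial solution is exactly the union of the root sets {x : L^{α_p}_{κ_p+1}(x) = 0} over p = 0, …, m; equivalently, nontrivial solutions exist precisely for x satisfying ∏_{p=0}^m L^{α_p}_{κ_p+1}(x) = 0, independently of the values of the mixing coefficients. -/

import Mathlib

open Real Finset

/-- Generalized Laguerre polynomial `𝓛_n^α(x)`. -/
noncomputable def glag (α : ℝ) (n : ℕ) (x : ℝ) : ℝ :=
  ∑ k ∈ Finset.range (n + 1),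
    (-1 : ℝ) ^ k * Real.Gamma ((n : ℝ) + α + 1) /
      (Real.Gamma ((k : ℝ) + α + 1) * (Nat.factorial (n - k) : ℝ) * (Nat.factorial k : ℝ)) * x ^ k

/-- Rescaled (Sonine) Laguerre polynomial `L_n^α(x) = 𝓛_n^α(x)/Γ(n+α+1)`. -/
noncomputable def slag (α : ℝ) (n : ℕ) (x : ℝ) : ℝ :=
  glag α n x / Real.Gamma ((n : ℝ) + α + 1)

/-- Rescaled Laguerre polynomial with integer index, zero for negative index. -/
noncomputable def slagZ (α : ℝ) (m : ℤ) (x : ℝ) : ℝ :=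
  if 0 ≤ m then slag α m.toNat x else 0

/-- A triangular system of coupled cut Laguerre recursions: recursion p (of order κ_p,
parameter α_p) contains mixing terms only in the amplitudes of recursions p' > p, with
j-independent mixing coefficients χ p p' and index shifts q p p'; boundary conditions
a^p_j = 0 for j < 0 and j > κ_p. The top recursion p = m has no mixing. -/
def TriangularCutLaguerreSys (m : ℕ) (α : ℕ → ℝ) (κ : ℕ → ℕ)
    (χ : ℕ → ℕ → ℝ) (q : ℕ → ℕ → ℤ) (x : ℝ) (a : ℕ → ℤ → ℝ) : Prop :=
  (∀ p ≤ m, ∀ j : ℤ, j < 0 → a p j = 0) ∧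
  (∀ p ≤ m, ∀ j : ℤ, (κ p : ℤ) < j → a p j = 0) ∧
  (∀ p ≤ m, ∀ j : ℤ, 0 ≤ j → j ≤ (κ p : ℤ) →
    a p (j - 1) - (2 * (j : ℝ) + α p + 1 - x) * a p j
      + ((j : ℝ) + 1) * ((j : ℝ) + α p + 1) * a p (j + 1)
      + ∑ p' ∈ Finset.Ioc p m, χ p p' * a p' (j + q p p') = 0)

lemma gammaPos {α : ℝ} (hα : α > -1) (k : ℕ) : 0 < Real.Gamma ((k:ℝ) + α + 1) := by
  apply Real.Gamma_pos_of_pos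
  have : (0:ℝ) ≤ (k:ℝ) := Nat.cast_nonneg k
  linarith

lemma gamma_succ {α : ℝ} (hα : α > -1) (k : ℕ) :
    Real.Gamma (((k:ℝ)+1) + α + 1) = ((k:ℝ) + α + 1) * Real.Gamma ((k:ℝ) + α + 1) := by
  have h : ((k:ℝ) + α + 1) ≠ 0 := (by have : (0:ℝ) ≤ (k:ℝ) := Nat.cast_nonneg k; linarith : (0:ℝ) < (k:ℝ)+α+1).ne'
  have := Real.Gamma_add_one h
  rw [← this]
  ring_nf

lemma slag_eq_sum {α : ℝ} (hα : α > -1) (n : ℕ) (x : ℝ) :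
    slag α n x = ∑ k ∈ Finset.range (n+1),
      (-1:ℝ)^k / (Real.Gamma ((k:ℝ)+α+1) * (Nat.factorial (n-k) : ℝ) * (Nat.factorial k : ℝ)) * x ^ k := by
  unfold slag glag
  rw [Finset.sum_div]
  refine Finset.sum_congr rfl fun k hk => ?_
  have hG := (gammaPos hα n).ne'
  have hGk := (gammaPos hα k).ne'
  have h1 : (Nat.factorial (n-k) : ℝ) ≠ 0 := Nat.cast_ne_zero.2 (Nat.factorial_ne_zero _)
  have h2 : (Nat.factorial k : ℝ) ≠ 0 := Nat.cast_ne_zero.2 (Nat.factorial_ne_zero _)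
  field_simp


lemma pad_sum (N M : ℕ) (h : N ≤ M) (f : ℕ → ℝ) :
    ∑ k ∈ Finset.range N, f k = ∑ k ∈ Finset.range M, if k < N then f k else 0 := by
  calc ∑ k ∈ Finset.range N, f k
      = ∑ k ∈ Finset.range N, (if k < N then f k else 0) :=
        Finset.sum_congr rfl fun k hk => (if_pos (Finset.mem_range.1 hk)).symm
    _ = ∑ k ∈ Finset.range M, (if k < N then f k else 0) :=
        Finset.sum_subset (Finset.range_subset_range.2 h)
          (fun x _ hnx => if_neg (by simpa using hnx))


set_option maxHeartbeats 1600000 in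
lemma slag_rec_aux {α : ℝ} (hα : α > -1) (n : ℕ) (x : ℝ) :
    slag α n x - (2*((n:ℝ)+1) + α + 1 - x) * slag α (n+1) x
      + ((n:ℝ)+2) * ((n:ℝ)+α+2) * slag α (n+2) x = 0 := by
  have hGne : ∀ j : ℕ, Real.Gamma ((j:ℝ)+α+1) ≠ 0 := fun j => (gammaPos hα j).ne'
  have hfac : ∀ j : ℕ, (Nat.factorial j : ℝ) ≠ 0 := fun j => Nat.cast_ne_zero.2 (Nat.factorial_ne_zero _)
  have hgam : ∀ s : ℕ, Real.Gamma (((s+1:ℕ):ℝ)+α+1) = ((s:ℝ) + α + 1) * Real.Gamma ((s:ℝ)+α+1) := by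
    intro s
    have h : ((s:ℝ) + α + 1) ≠ 0 :=
      (by have : (0:ℝ) ≤ (s:ℝ) := Nat.cast_nonneg s; linarith : (0:ℝ) < (s:ℝ)+α+1).ne'
    have h2 := Real.Gamma_add_one h
    push_cast
    rw [show (s:ℝ) + 1 + α + 1 = ((s:ℝ) + α + 1) + 1 from by ring, h2]
  rw [slag_eq_sum hα n x, slag_eq_sum hα (n+1) x, slag_eq_sum hα (n+2) x]
  have e1 := pad_sum (n+1) (n+3) (by omega)
    (fun k => (-1:ℝ)^k / (Real.Gamma ((k:ℝ)+α+1) * (Nat.factorial (n-k) : ℝ) * (Nat.factorial k : ℝ)) * x ^ k)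
  have e2 := pad_sum (n+2) (n+3) (by omega)
    (fun k => (-1:ℝ)^k / (Real.Gamma ((k:ℝ)+α+1) * (Nat.factorial (n+1-k) : ℝ) * (Nat.factorial k : ℝ)) * x ^ k)
  have e3 : x * ∑ k ∈ Finset.range (n+2),
      (-1:ℝ)^k / (Real.Gamma ((k:ℝ)+α+1) * (Nat.factorial (n+1-k) : ℝ) * (Nat.factorial k : ℝ)) * x ^ k
    = ∑ k ∈ Finset.range (n+3), (if k = 0 then 0 else
      (-1:ℝ)^(k-1) / (Real.Gamma (((k-1:ℕ):ℝ)+α+1) * (Nat.factorial (n+2-k) : ℝ) * (Nat.factorial (k-1) : ℝ)) * x ^ k) := by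
    rw [Finset.sum_range_succ' (fun k => if k = 0 then 0 else
      (-1:ℝ)^(k-1) / (Real.Gamma (((k-1:ℕ):ℝ)+α+1) * (Nat.factorial (n+2-k) : ℝ) * (Nat.factorial (k-1) : ℝ)) * x ^ k) (n+2)]
    rw [Finset.mul_sum]
    simp only [Nat.succ_ne_zero, if_neg, if_pos rfl, Nat.add_sub_cancel, add_zero, ite_false, ite_true]
    refine Finset.sum_congr rfl fun k hk => ?_
    have h2 : n + 2 - (k+1) = n + 1 - k := by omega
    rw [h2]
    ring
  rw [sub_mul, e3, e1, e2, Finset.mul_sum, Finset.mul_sum, ← Finset.sum_sub_distrib,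
    ← Finset.sum_sub_distrib, ← Finset.sum_add_distrib]
  refine Finset.sum_eq_zero fun k hk => ?_
  have hk3 : k < n + 3 := Finset.mem_range.1 hk
  rcases k with _ | s
  · -- k = 0
    simp only [if_pos (by omega : 0 < n + 1), if_pos (by omega : 0 < n + 2), if_pos rfl,
      Nat.sub_zero, pow_zero, Nat.cast_zero]
    rw [show n + 1 = n + 1 from rfl, show ((n+1).factorial : ℝ) = ((n:ℝ)+1) * (n.factorial : ℝ) from by
        push_cast [Nat.factorial_succ]; ring,
      show ((n+2).factorial : ℝ) = ((n:ℝ)+2) * (((n:ℝ)+1) * (n.factorial : ℝ)) from by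
        push_cast [Nat.factorial_succ]; ring]
    have h1 : Real.Gamma ((0:ℝ)+α+1) ≠ 0 := by have := hGne 0; simpa using this
    have h2 := hfac n
    have h3 : ((n:ℝ)+1) ≠ 0 := by positivity
    have h4 : ((n:ℝ)+2) ≠ 0 := by positivity
    set g := Real.Gamma ((0:ℝ)+α+1) with hg
    field_simp
    simp
    ring
  · -- k = s+1
    have hsub : s + 1 - 1 = s := rfl
    have hpow : ((-1:ℝ))^(s+1) = -(-1:ℝ)^s := by ring
    have hsplit : s + 1 ≤ n ∨ s + 1 = n + 1 ∨ s + 1 = n + 2 := by omega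
    rcases hsplit with h | h | h
    · obtain ⟨t, ht⟩ : ∃ t, n = s + 1 + t := ⟨n - (s+1), by omega⟩
      subst ht
      simp only [if_pos (by omega : s + 1 < s + 1 + t + 1), if_pos (by omega : s + 1 < s + 1 + t + 2),
        if_neg (Nat.succ_ne_zero s), hsub]
      rw [show s + 1 + t - (s+1) = t from by omega, show s + 1 + t + 1 - (s+1) = t + 1 from by omega,
        show s + 1 + t + 2 - (s+1) = t + 2 from by omega]
      rw [hgam s, hpow]
      rw [show (((s+1).factorial : ℕ) : ℝ) = ((s:ℝ)+1) * (s.factorial : ℝ) from by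
          push_cast [Nat.factorial_succ]; ring,
        show (((t+1).factorial : ℕ) : ℝ) = ((t:ℝ)+1) * (t.factorial : ℝ) from by
          push_cast [Nat.factorial_succ]; ring,
        show (((t+2).factorial : ℕ) : ℝ) = ((t:ℝ)+2) * (((t:ℝ)+1) * (t.factorial : ℝ)) from by
          push_cast [Nat.factorial_succ]; ring]
      have h1 := hGne s
      have h2 : ((s:ℝ) + α + 1) ≠ 0 :=
        (by have : (0:ℝ) ≤ (s:ℝ) := Nat.cast_nonneg s; linarith : (0:ℝ) < (s:ℝ)+α+1).ne'
      have h3 := hfac s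
      have h4 := hfac t
      have h5 : ((s:ℝ)+1) ≠ 0 := by positivity
      have h6 : ((t:ℝ)+1) ≠ 0 := by positivity
      have h7 : ((t:ℝ)+2) ≠ 0 := by positivity
      set g := Real.Gamma ((s:ℝ)+α+1) with hg
      push_cast
      field_simp
      ring
    · have hns : n = s := by omega
      subst hns
      simp only [if_neg (by omega : ¬ n + 1 < n + 1), if_pos (by omega : n + 1 < n + 2),
        if_neg (Nat.succ_ne_zero n), hsub]
      rw [show n + 1 - (n+1) = 0 from by omega, show n + 2 - (n+1) = 1 from by omega]
      rw [hgam n, hpow]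
      rw [show (((n+1).factorial : ℕ) : ℝ) = ((n:ℝ)+1) * (n.factorial : ℝ) from by
          push_cast [Nat.factorial_succ]; ring]
      have h1 := hGne n
      have h2 : ((n:ℝ) + α + 1) ≠ 0 :=
        (by have : (0:ℝ) ≤ (n:ℝ) := Nat.cast_nonneg n; linarith : (0:ℝ) < (n:ℝ)+α+1).ne'
      have h3 := hfac n
      have h5 : ((n:ℝ)+1) ≠ 0 := by positivity
      set g := Real.Gamma ((n:ℝ)+α+1) with hg
      push_cast [Nat.factorial]
      field_simp
      ring
    · have hns : s = n + 1 := by omega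
      subst hns
      simp only [if_neg (by omega : ¬ n + 1 + 1 < n + 1), if_neg (by omega : ¬ n + 1 + 1 < n + 2),
        if_neg (Nat.succ_ne_zero (n+1)), hsub]
      rw [show n + 2 - (n+1+1) = 0 from by omega]
      rw [hgam (n+1), hgam n, hpow]
      rw [show (((n+1+1).factorial : ℕ) : ℝ) = ((n:ℝ)+2) * (((n:ℝ)+1) * (n.factorial : ℝ)) from by
          push_cast [Nat.factorial_succ]; ring,
        show (((n+1).factorial : ℕ) : ℝ) = ((n:ℝ)+1) * (n.factorial : ℝ) from by
          push_cast [Nat.factorial_succ]; ring]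
      have h1 := hGne n
      have h2 : ((n:ℝ) + α + 1) ≠ 0 :=
        (by have : (0:ℝ) ≤ (n:ℝ) := Nat.cast_nonneg n; linarith : (0:ℝ) < (n:ℝ)+α+1).ne'
      have h2' : ((n:ℝ) + 1 + α + 1) ≠ 0 := by
        have : (0:ℝ) ≤ (n:ℝ) := Nat.cast_nonneg n; linarith
      have h3 := hfac n
      have h5 : ((n:ℝ)+1) ≠ 0 := by positivity
      have h6 : ((n:ℝ)+2) ≠ 0 := by positivity
      set g := Real.Gamma ((n:ℝ)+α+1) with hg
      push_cast [Nat.factorial]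
      field_simp
      ring

lemma slag_one {α : ℝ} (hα : α > -1) (x : ℝ) :
    slag α 1 x = 1 / Real.Gamma (α+1) - x / Real.Gamma (α+1+1) := by
  rw [slag_eq_sum hα 1 x]
  rw [Finset.sum_range_succ, Finset.sum_range_succ, Finset.sum_range_zero]
  norm_num [Nat.factorial]
  rw [show (1:ℝ) + α + 1 = α + 1 + 1 from by ring]
  ring

lemma slag_zero' {α : ℝ} (hα : α > -1) (x : ℝ) : slag α 0 x = 1 / Real.Gamma (α + 1) := by
  rw [slag_eq_sum hα 0 x]
  norm_num [Nat.factorial]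

lemma slag_rec {α : ℝ} (hα : α > -1) (n : ℕ) (x : ℝ) :
    slagZ α ((n:ℤ)-1) x - (2*(n:ℝ) + α + 1 - x) * slag α n x
      + ((n:ℝ)+1)*((n:ℝ)+α+1)*slag α (n+1) x = 0 := by
  rcases n with _ | k
  · simp only [Nat.cast_zero, slagZ]
    rw [if_neg (by omega : ¬ (0:ℤ) ≤ 0 - 1)]
    rw [slag_zero' hα, slag_one hα]
    have hg1 : Real.Gamma (α+1) ≠ 0 := by
      have := gammaPos hα 0; simp only [Nat.cast_zero] at this
      rw [show (0:ℝ)+α+1 = α+1 from by ring] at this; exact this.ne'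
    have hgs : Real.Gamma (α+1+1) = (α+1) * Real.Gamma (α+1) :=
      Real.Gamma_add_one (by linarith)
    rw [hgs]
    have h2 : α + 1 ≠ 0 := by linarith
    field_simp
    ring
  · have h0 : ((k+1:ℕ):ℤ) - 1 = ((k:ℕ):ℤ) := by push_cast; ring
    rw [h0]
    have h2 : slagZ α ((k:ℕ):ℤ) x = slag α k x := by simp [slagZ]
    rw [h2]
    have := slag_rec_aux hα k x
    push_cast
    push_cast at this
    linarith [this]

lemma slag_ne_zero_at_zero {α : ℝ} (hα : α > -1) (x : ℝ) : slag α 0 x ≠ 0 := by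
  rw [slag_zero' hα]
  have : Real.Gamma (α+1) ≠ 0 := by
    have := gammaPos hα 0; simp only [Nat.cast_zero] at this
    rw [show (0:ℝ)+α+1 = α+1 from by ring] at this; exact this.ne'
  simp [this]

lemma cut_forward {α : ℝ} (hα : α > -1) (κ : ℕ) (x : ℝ) (b : ℤ → ℝ)
    (h0 : ∀ j : ℤ, j < 0 → b j = 0) (h1 : ∀ j : ℤ, (κ:ℤ) < j → b j = 0)
    (hrec : ∀ j : ℤ, 0 ≤ j → j ≤ (κ:ℤ) →
      b (j-1) - (2*(j:ℝ) + α + 1 - x) * b j + ((j:ℝ)+1)*((j:ℝ)+α+1)*b (j+1) = 0)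
    (hnz : ∃ j, b j ≠ 0) : slag α (κ+1) x = 0 := by
  set C := b 0 * Real.Gamma (α+1) with hC
  have hg1 : Real.Gamma (α+1) ≠ 0 := by
    have := gammaPos hα 0; simp only [Nat.cast_zero] at this
    rw [show (0:ℝ)+α+1 = α+1 from by ring] at this; exact this.ne'
  have H : ∀ n : ℕ, n ≤ κ + 1 → b (n:ℤ) = C * slag α n x := by
    intro n
    induction n using Nat.strong_induction_on with
    | _ n ih =>
      intro hn
      rcases n with _ | t
      · rw [slag_zero' hα]
        simp only [Nat.cast_zero, hC]
        field_simp
      · have ht : (t:ℤ) ≤ (κ:ℤ) := by exact_mod_cast Nat.lt_succ_iff.1 (by omega)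
        have hb := hrec (t:ℤ) (by positivity) ht
        have hs := slag_rec hα t x
        have hbt : b (t:ℤ) = C * slag α t x := ih t (by omega) (by omega)
        have hbtm : b ((t:ℤ) - 1) = C * slagZ α ((t:ℤ)-1) x := by
          rcases t with _ | s
          · rw [h0 _ (by omega), slagZ]
            rw [if_neg (by omega : ¬ (0:ℤ) ≤ ((0:ℕ):ℤ) - 1)]
            ring
          · have : ((s+1:ℕ):ℤ) - 1 = ((s:ℕ):ℤ) := by push_cast; ring
            rw [this, slagZ, if_pos (by positivity : (0:ℤ) ≤ ((s:ℕ):ℤ)), Int.toNat_natCast]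
            exact ih s (by omega) (by omega)
        have hBne : ((t:ℝ)+1)*((t:ℝ)+α+1) ≠ 0 := by
          have h2 : ((t:ℝ) + α + 1) > 0 := by
            have : (0:ℝ) ≤ (t:ℝ) := Nat.cast_nonneg t; linarith
          positivity
        have hcast : ((t:ℤ):ℝ) = (t:ℝ) := by push_cast; ring
        rw [hcast] at hb
        have key : ((t:ℝ)+1)*((t:ℝ)+α+1) * (b ((t:ℤ)+1) - C * slag α (t+1) x) = 0 := by
          linear_combination hb - C * hs - hbtm + (2*(t:ℝ)+α+1-x) * hbt
        have := mul_eq_zero.1 key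
        rcases this with h | h
        · exact absurd h hBne
        · have : b ((t:ℤ)+1) = C * slag α (t+1) x := by linarith
          rw [show ((t+1:ℕ):ℤ) = (t:ℤ)+1 from by push_cast; ring]
          exact this
  have hend : b ((κ+1:ℕ):ℤ) = C * slag α (κ+1) x := H (κ+1) le_rfl
  have hz : b ((κ+1:ℕ):ℤ) = 0 := h1 _ (by push_cast; omega)
  have hCslag : C * slag α (κ+1) x = 0 := by rw [← hend]; exact hz
  by_contra hne
  have hC0 : C = 0 := by
    rcases mul_eq_zero.1 hCslag with h | h
    · exact h
    · exact absurd h hne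
  obtain ⟨j, hj⟩ := hnz
  apply hj
  rcases lt_or_ge j 0 with h | h
  · exact h0 j h
  · rcases le_or_gt j (κ:ℤ) with h2 | h2
    · have : j = ((j.toNat:ℕ):ℤ) := by omega
      rw [this, H j.toNat (by omega), hC0, zero_mul]
    · exact h1 j h2

lemma cut_hom {α : ℝ} (hα : α > -1) (κ : ℕ) (x : ℝ) (hz : slag α (κ+1) x = 0) :
    ∃ b : ℤ → ℝ, (∀ j : ℤ, j < 0 → b j = 0) ∧ (∀ j : ℤ, (κ:ℤ) < j → b j = 0) ∧
      (∀ j : ℤ, 0 ≤ j → j ≤ (κ:ℤ) →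
        b (j-1) - (2*(j:ℝ) + α + 1 - x) * b j + ((j:ℝ)+1)*((j:ℝ)+α+1)*b (j+1) = 0) ∧
      b 0 ≠ 0 := by
  refine ⟨fun j => if 0 ≤ j ∧ j ≤ (κ:ℤ) then slag α j.toNat x else 0, ?_, ?_, ?_, ?_⟩
  · intro j hj; have h : ¬(0 ≤ j ∧ j ≤ (κ:ℤ)) := by omega
    simp only [h, if_false]
  · intro j hj; have h : ¬(0 ≤ j ∧ j ≤ (κ:ℤ)) := by omega
    simp only [h, if_false]
  · intro j hj0 hjκ
    beta_reduce
    obtain ⟨n, rfl⟩ : ∃ n : ℕ, j = (n:ℤ) := ⟨j.toNat, by omega⟩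
    have hnκ : n ≤ κ := by exact_mod_cast hjκ
    have eb : (if 0 ≤ (n:ℤ) ∧ (n:ℤ) ≤ (κ:ℤ) then slag α ((n:ℤ)).toNat x else 0) = slag α n x := by
      rw [if_pos ⟨by positivity, hjκ⟩, Int.toNat_natCast]
    have ebm : (if 0 ≤ (n:ℤ)-1 ∧ (n:ℤ)-1 ≤ (κ:ℤ) then slag α ((n:ℤ)-1).toNat x else 0)
        = slagZ α ((n:ℤ)-1) x := by
      rcases n with _ | s
      · rw [if_neg (by omega), slagZ, if_neg (by omega)]
      · have h1 : ((s+1:ℕ):ℤ) - 1 = ((s:ℕ):ℤ) := by push_cast; ring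
        rw [h1, if_pos ⟨by positivity, by omega⟩, Int.toNat_natCast, slagZ,
          if_pos (by positivity : (0:ℤ) ≤ ((s:ℕ):ℤ)), Int.toNat_natCast]
    have ebp : (if 0 ≤ (n:ℤ)+1 ∧ (n:ℤ)+1 ≤ (κ:ℤ) then slag α ((n:ℤ)+1).toNat x else 0)
        = slag α (n+1) x := by
      rcases eq_or_lt_of_le hnκ with h | h
      · subst h
        rw [if_neg (by omega), hz]
      · rw [if_pos ⟨by positivity, by omega⟩,
          show ((n:ℤ)+1).toNat = n+1 from by omega]
    simp only [eb, ebm, ebp]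
    have := slag_rec hα n x
    have hc : (((n:ℤ)):ℝ) = (n:ℝ) := by push_cast; ring
    rw [hc]
    linarith [this]
  · beta_reduce
    rw [if_pos ⟨le_refl 0, by positivity⟩]
    exact slag_ne_zero_at_zero hα x

noncomputable def pSeq (α x : ℝ) (r : ℤ → ℝ) : ℕ → ℝ × ℝ
  | 0 => (0, 0)
  | n+1 => ((pSeq α x r n).2,
      ((2*(n:ℝ) + α + 1 - x) * (pSeq α x r n).2 - (pSeq α x r n).1 - r (n:ℤ))
        / (((n:ℝ)+1)*((n:ℝ)+α+1)))

noncomputable def pbZ (α x : ℝ) (r : ℤ → ℝ) (j : ℤ) : ℝ :=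
  if 0 ≤ j then (pSeq α x r j.toNat).2 else 0

lemma pbZ_rec {α : ℝ} (hα : α > -1) (x : ℝ) (r : ℤ → ℝ) (n : ℕ) :
    pbZ α x r ((n:ℤ)-1) - (2*(n:ℝ) + α + 1 - x) * pbZ α x r (n:ℤ)
      + ((n:ℝ)+1)*((n:ℝ)+α+1) * pbZ α x r ((n:ℤ)+1) + r (n:ℤ) = 0 := by
  have hB : (((n:ℝ)+1)*((n:ℝ)+α+1)) ≠ 0 := by
    have h2 : ((n:ℝ) + α + 1) > 0 := by
      have : (0:ℝ) ≤ (n:ℝ) := Nat.cast_nonneg n; linarith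
    positivity
  have e1 : pbZ α x r ((n:ℤ)+1) = (pSeq α x r (n+1)).2 := by
    rw [pbZ, if_pos (by positivity), show ((n:ℤ)+1).toNat = n+1 from by omega]
  have e2 : pbZ α x r (n:ℤ) = (pSeq α x r n).2 := by
    rw [pbZ, if_pos (by positivity), Int.toNat_natCast]
  have e3 : pbZ α x r ((n:ℤ)-1) = (pSeq α x r n).1 := by
    rcases n with _ | s
    · rw [pbZ, if_neg (by omega)]
      rfl
    · rw [show ((s+1:ℕ):ℤ) - 1 = ((s:ℕ):ℤ) from by push_cast; ring, pbZ,
        if_pos (by positivity), Int.toNat_natCast]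
      rfl
  rw [e1, e2, e3, pSeq]
  have hB2 : ((n:ℝ)+α+1) ≠ 0 :=
    (by have : (0:ℝ) ≤ (n:ℝ) := Nat.cast_nonneg n; linarith : (0:ℝ) < (n:ℝ)+α+1).ne'
  field_simp
  ring

lemma cut_inhom {α : ℝ} (hα : α > -1) (κ : ℕ) (x : ℝ) (hnz : slag α (κ+1) x ≠ 0) (r : ℤ → ℝ) :
    ∃ b : ℤ → ℝ, (∀ j : ℤ, j < 0 → b j = 0) ∧ (∀ j : ℤ, (κ:ℤ) < j → b j = 0) ∧
      (∀ j : ℤ, 0 ≤ j → j ≤ (κ:ℤ) →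
        b (j-1) - (2*(j:ℝ) + α + 1 - x) * b j + ((j:ℝ)+1)*((j:ℝ)+α+1)*b (j+1) + r j = 0) := by
  set c := - (pSeq α x r (κ+1)).2 / slag α (κ+1) x with hc
  have hcs : c * slag α (κ+1) x + (pSeq α x r (κ+1)).2 = 0 := by
    rw [hc]; field_simp; ring
  refine ⟨fun j => if 0 ≤ j ∧ j ≤ (κ:ℤ) then c * slag α j.toNat x + (pSeq α x r j.toNat).2 else 0,
    ?_, ?_, ?_⟩
  · intro j hj; have h : ¬(0 ≤ j ∧ j ≤ (κ:ℤ)) := by omega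
    simp only [h, if_false]
  · intro j hj; have h : ¬(0 ≤ j ∧ j ≤ (κ:ℤ)) := by omega
    simp only [h, if_false]
  · intro j hj0 hjκ
    beta_reduce
    obtain ⟨n, rfl⟩ : ∃ n : ℕ, j = (n:ℤ) := ⟨j.toNat, by omega⟩
    have hnκ : n ≤ κ := by exact_mod_cast hjκ
    have eb : (if 0 ≤ (n:ℤ) ∧ (n:ℤ) ≤ (κ:ℤ) then c * slag α ((n:ℤ)).toNat x + (pSeq α x r ((n:ℤ)).toNat).2 else 0)
        = c * slag α n x + pbZ α x r (n:ℤ) := by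
      rw [if_pos ⟨by positivity, hjκ⟩, Int.toNat_natCast, pbZ, if_pos (by positivity),
        Int.toNat_natCast]
    have ebm : (if 0 ≤ (n:ℤ)-1 ∧ (n:ℤ)-1 ≤ (κ:ℤ) then c * slag α ((n:ℤ)-1).toNat x + (pSeq α x r ((n:ℤ)-1).toNat).2 else 0)
        = c * slagZ α ((n:ℤ)-1) x + pbZ α x r ((n:ℤ)-1) := by
      rcases n with _ | s
      · rw [if_neg (by omega), slagZ, if_neg (by omega), pbZ, if_neg (by omega)]
        ring
      · have h1 : ((s+1:ℕ):ℤ) - 1 = ((s:ℕ):ℤ) := by push_cast; ring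
        rw [h1, if_pos ⟨by positivity, by omega⟩, Int.toNat_natCast, slagZ,
          if_pos (by positivity : (0:ℤ) ≤ ((s:ℕ):ℤ)), Int.toNat_natCast, pbZ,
          if_pos (by positivity), Int.toNat_natCast]
    have ebp : (if 0 ≤ (n:ℤ)+1 ∧ (n:ℤ)+1 ≤ (κ:ℤ) then c * slag α ((n:ℤ)+1).toNat x + (pSeq α x r ((n:ℤ)+1).toNat).2 else 0)
        = c * slag α (n+1) x + pbZ α x r ((n:ℤ)+1) := by
      have hp : pbZ α x r ((n:ℤ)+1) = (pSeq α x r (n+1)).2 := by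
        rw [pbZ, if_pos (by positivity), show ((n:ℤ)+1).toNat = n+1 from by omega]
      rcases eq_or_lt_of_le hnκ with h | h
      · subst h
        rw [if_neg (by omega), hp]
        linarith [hcs]
      · rw [if_pos ⟨by positivity, by omega⟩, show ((n:ℤ)+1).toNat = n+1 from by omega, hp]
    simp only [eb, ebm, ebp]
    have hs := slag_rec hα n x
    have hp := pbZ_rec hα x r n
    have hcast : (((n:ℤ)):ℝ) = (n:ℝ) := by push_cast; ring
    rw [hcast]
    linear_combination c * hs + hp

/-- Corollary 5 (th.piate): for any triangular system of coupled cut Laguerre recursions,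
a nontrivial solution exists precisely when ∏_{p=0}^m L^{α_p}_{κ_p+1}(x) = 0, independently
of the values of the mixing coefficients. -/
theorem triangular_system_spectrum (m : ℕ) (α : ℕ → ℝ) (κ : ℕ → ℕ)
    (hα : ∀ p ≤ m, α p > -1) (χ : ℕ → ℕ → ℝ) (q : ℕ → ℕ → ℤ) (x : ℝ) :
    (∃ a : ℕ → ℤ → ℝ, TriangularCutLaguerreSys m α κ χ q x a ∧
        ∃ p ≤ m, ∃ j : ℤ, a p j ≠ 0) ↔
      ∏ p ∈ Finset.range (m + 1), slag (α p) (κ p + 1) x = 0 := by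
  constructor
  · rintro ⟨a, ⟨hb0, hb1, hrec⟩, hnz⟩
    classical
    obtain ⟨p₀, hp₀m, j₀, hj₀⟩ := hnz
    set P : ℕ → Prop := fun p => ∃ j : ℤ, a p j ≠ 0 with hP
    have hPm : P (Nat.findGreatest P m) := Nat.findGreatest_spec hp₀m ⟨j₀, hj₀⟩
    set pm := Nat.findGreatest P m with hpm
    have hpm_le : pm ≤ m := Nat.findGreatest_le m
    have hzero : ∀ p', pm < p' → p' ≤ m → ∀ j, a p' j = 0 := by
      intro p' h1 h2 j
      by_contra h
      exact (Nat.findGreatest_is_greatest h1 h2) ⟨j, h⟩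
    have hpure : ∀ j : ℤ, 0 ≤ j → j ≤ (κ pm : ℤ) →
        a pm (j-1) - (2*(j:ℝ) + α pm + 1 - x) * a pm j
          + ((j:ℝ)+1)*((j:ℝ)+α pm+1)*a pm (j+1) = 0 := by
      intro j h0 h1
      have h2 := hrec pm hpm_le j h0 h1
      have hsum : ∑ p' ∈ Finset.Ioc pm m, χ pm p' * a p' (j + q pm p') = 0 :=
        Finset.sum_eq_zero fun p' hp' => by
          rw [hzero p' (Finset.mem_Ioc.1 hp').1 (Finset.mem_Ioc.1 hp').2, mul_zero]
      rw [hsum] at h2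
      linarith [h2]
    have hfin := cut_forward (hα pm hpm_le) (κ pm) x (a pm) (hb0 pm hpm_le)
      (hb1 pm hpm_le) hpure hPm
    exact Finset.prod_eq_zero (Finset.mem_range.2 (by omega)) hfin
  · intro hprod
    classical
    obtain ⟨p₀, hp₀, hz₀⟩ := Finset.prod_eq_zero_iff.1 hprod
    have hex : ∃ p, p ≤ m ∧ slag (α p) (κ p + 1) x = 0 :=
      ⟨p₀, Nat.lt_succ_iff.1 (Finset.mem_range.1 hp₀), hz₀⟩
    set ps := Nat.find hex with hps
    obtain ⟨hps_le, hps_z⟩ := Nat.find_spec hex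
    have hmin : ∀ t, t < ps → slag (α t) (κ t + 1) x ≠ 0 := fun t ht h =>
      Nat.find_min hex ht ⟨by omega, h⟩
    set Q : ℕ → Prop := fun t => ∃ a : ℕ → ℤ → ℝ,
      (∀ p, t ≤ p → p ≤ m → ∀ j : ℤ, j < 0 → a p j = 0) ∧
      (∀ p, t ≤ p → p ≤ m → ∀ j : ℤ, (κ p : ℤ) < j → a p j = 0) ∧
      (∀ p, t ≤ p → p ≤ m → ∀ j : ℤ, 0 ≤ j → j ≤ (κ p : ℤ) →
        a p (j - 1) - (2 * (j : ℝ) + α p + 1 - x) * a p j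
          + ((j : ℝ) + 1) * ((j : ℝ) + α p + 1) * a p (j + 1)
          + ∑ p' ∈ Finset.Ioc p m, χ p p' * a p' (j + q p p') = 0) ∧
      a ps 0 ≠ 0 with hQ
    have hbase : Q ps := by
      obtain ⟨bh, hbh0, hbh1, hbhrec, hbhnz⟩ := cut_hom (hα ps hps_le) (κ ps) x hps_z
      refine ⟨fun p => if p = ps then bh else fun _ => 0, ?_, ?_, ?_, ?_⟩
      · intro p hp1 hp2 j hj
        beta_reduce
        by_cases h : p = ps
        · subst h; rw [if_pos rfl]; exact hbh0 j hj
        · rw [if_neg h]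
      · intro p hp1 hp2 j hj
        beta_reduce
        by_cases h : p = ps
        · subst h; rw [if_pos rfl]; exact hbh1 j hj
        · rw [if_neg h]
      · intro p hp1 hp2 j hj0 hj1
        beta_reduce
        have hsum : ∑ p' ∈ Finset.Ioc p m,
            χ p p' * (if p' = ps then bh else fun _ => (0:ℝ)) (j + q p p') = 0 := by
          refine Finset.sum_eq_zero fun p' hp' => ?_
          have hne : p' ≠ ps := by
            have := (Finset.mem_Ioc.1 hp').1
            omega
          rw [if_neg hne, mul_zero]
        rw [hsum]
        by_cases h : p = ps
        · subst h
          rw [if_pos rfl]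
          have := hbhrec j hj0 hj1
          linarith [this]
        · rw [if_neg h]
          ring
      · beta_reduce
        rw [if_pos rfl]
        exact hbhnz
    have hstep : ∀ t, t < ps → Q (t+1) → Q t := by
      intro t ht hQt
      obtain ⟨a, A0, A1, AR, An⟩ := hQt
      have htm : t ≤ m := by omega
      set r : ℤ → ℝ := fun j => ∑ p' ∈ Finset.Ioc t m, χ t p' * a p' (j + q t p') with hr
      obtain ⟨b, hb0', hb1', hbrec'⟩ := cut_inhom (hα t htm) (κ t) x (hmin t ht) r
      refine ⟨fun p => if p = t then b else a p, ?_, ?_, ?_, ?_⟩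
      · intro p hp1 hp2 j hj
        beta_reduce
        by_cases h : p = t
        · subst h; rw [if_pos rfl]; exact hb0' j hj
        · rw [if_neg h]; exact A0 p (by omega) hp2 j hj
      · intro p hp1 hp2 j hj
        beta_reduce
        by_cases h : p = t
        · subst h; rw [if_pos rfl]; exact hb1' j hj
        · rw [if_neg h]; exact A1 p (by omega) hp2 j hj
      · intro p hp1 hp2 j hj0 hj1
        beta_reduce
        have hsum : ∑ p' ∈ Finset.Ioc p m,
            χ p p' * (if p' = t then b else a p') (j + q p p')
            = ∑ p' ∈ Finset.Ioc p m, χ p p' * a p' (j + q p p') := by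
          refine Finset.sum_congr rfl fun p' hp' => ?_
          have hne : p' ≠ t := by
            have := (Finset.mem_Ioc.1 hp').1
            omega
          rw [if_neg hne]
        rw [hsum]
        by_cases h : p = t
        · subst h
          rw [if_pos rfl]
          exact hbrec' j hj0 hj1
        · rw [if_neg h]
          exact AR p (by omega) hp2 j hj0 hj1
      · beta_reduce
        have hne : ps ≠ t := by omega
        rw [if_neg hne]
        exact An
    have hall : ∀ d : ℕ, Q (ps - d) := by
      intro d
      induction d with
      | zero => simpa using hbase
      | succ d ihd =>
        by_cases h : ps - d = 0
        · rw [show ps - (d+1) = ps - d from by omega]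
          exact ihd
        · have h1 : ps - (d+1) < ps := by omega
          have h2 : ps - (d+1) + 1 = ps - d := by omega
          refine hstep _ h1 ?_
          rw [h2]
          exact ihd
    have hQ0 : Q 0 := by
      have := hall ps
      simpa using this
    obtain ⟨a, A0, A1, AR, An⟩ := hQ0
    exact ⟨a, ⟨fun p hp => A0 p (Nat.zero_le _) hp, fun p hp => A1 p (Nat.zero_le _) hp,
      fun p hp => AR p (Nat.zero_le _) hp⟩, ps, hps_le, 0, An⟩
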